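/- Let α ∈ Δ and let D_λ be a conformal derivation of CL(b,φ) which is homogeneous of degree α, i.e. for every β ∈ Δ one has D_λ(x_β) = f_β(λ,∂) x_{α+β} for some f_β(λ,∂) ∈ ℂ[λ,∂]. Then D_λ is inner: there exists g(∂) ∈ ℂ[∂] such that D_λ = ad(g(∂)x_α)_λ, i.e. f_β(λ,∂) = g(−λ)·((α+b)∂ + (α+β+2b)λ + B(α,β)) for all β ∈ Δ (after absorbing G(λ) := g(−λ), equivalently: there exists G ∈ ℂ[λ] with f_β(λ,∂) = G(λ)((α+b)∂ + (α+β+2b)λ + B(α,β)) for all β ∈ Δ). -/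

import Mathlib

/-- Evaluation of a two-variable polynomial `P(λ,∂) ∈ ℂ[λ,∂]` at `λ = l`, `∂ = d`. -/
noncomputable def ev2 (P : MvPolynomial (Fin 2) ℂ) (l d : ℂ) : ℂ :=
  MvPolynomial.eval ![l, d] P

/-- `B(α,β) = (1/b)(φ(α)β − φ(β)α + b(φ(α) − φ(β)))`. -/
noncomputable def Bc (b : ℂ) {Δ : AddSubgroup ℂ} (φ : Δ →+ ℂ) (α β : Δ) : ℂ :=
  (1 / b) * (φ α * (β : ℂ) - φ β * (α : ℂ) + b * (φ α - φ β))

lemma eval_aeval2 (P : MvPolynomial (Fin 2) ℂ) (p q : Polynomial ℂ) (l : ℂ) :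
    (MvPolynomial.aeval ![p, q] P).eval l = MvPolynomial.eval ![p.eval l, q.eval l] P := by
  rw [MvPolynomial.aeval_def]
  rw [show Polynomial.eval l (MvPolynomial.eval₂ (algebraMap ℂ (Polynomial ℂ)) ![p, q] P)
      = Polynomial.evalRingHom l (MvPolynomial.eval₂ (algebraMap ℂ (Polynomial ℂ)) ![p, q] P) from rfl]
  rw [MvPolynomial.eval₂_comp_left]
  congr 1
  · ext x; simp
  · funext i; fin_cases i <;> simp


/-- Let `D_λ` be a conformal derivation of `CL(b,φ)` homogeneous of
degree `α`, i.e. `D_λ(x_β) = f_β(λ,∂)x_{α+β}` with `f_β ∈ ℂ[λ,∂]`.  The derivation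
identity `D_λ[x_β μ x_γ] = [(D_λ x_β) λ+μ x_γ] + [x_β μ (D_λ x_γ)]`, written out on the
`x_{α+β+γ}`-component using `[x_α λ x_β] = ((α+b)∂ + (α+β+2b)λ + B(α,β))x_{α+β}`,
`D_λ(∂u) = (∂+λ)D_λu` and `[(p(∂)u) λ v] = p(−λ)[u λ v]`, is the hypothesis `hder`
(an identity of polynomials in `λ, μ, ∂`, stated via evaluation at all `l, m, d ∈ ℂ`).
Then `D_λ` is inner: there is `G ∈ ℂ[λ]` (namely `G(λ) = g(−λ)` for
`D = ad(g(∂)x_α)_λ`) with `f_β(λ,∂) = G(λ)((α+b)∂ + (α+β+2b)λ + B(α,β))` for all `β`. -/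
theorem stmt7 (Δ : AddSubgroup ℂ) (hΔinf : (Δ : Set ℂ).Infinite)
    (b : ℂ) (hb : 2 * b ∉ Δ) (φ : Δ →+ ℂ)
    (α : Δ) (f : Δ → MvPolynomial (Fin 2) ℂ)
    (hder : ∀ β γ : Δ, ∀ l m d : ℂ,
      (((β : ℂ) + b) * (d + l) + ((β : ℂ) + (γ : ℂ) + 2 * b) * m + Bc b φ β γ)
          * ev2 (f (β + γ)) l d
        = ev2 (f β) l (-l - m)
            * (((α : ℂ) + (β : ℂ) + b) * d
                + ((α : ℂ) + (β : ℂ) + (γ : ℂ) + 2 * b) * (l + m)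
                + Bc b φ (α + β) γ)
          + ev2 (f γ) l (m + d)
            * (((β : ℂ) + b) * d + ((α : ℂ) + (β : ℂ) + (γ : ℂ) + 2 * b) * m
                + Bc b φ β (α + γ))) :
    ∃ G : Polynomial ℂ, ∀ β : Δ, ∀ l d : ℂ,
      ev2 (f β) l d
        = G.eval l * (((α : ℂ) + b) * d + ((α : ℂ) + (β : ℂ) + 2 * b) * l
            + Bc b φ α β) := by
  have hb0 : b ≠ 0 := by
    intro h; apply hb; rw [h, mul_zero]; exact Δ.zero_mem
  have hαb : (α : ℂ) + b ≠ 0 := by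
    intro h
    apply hb
    have : 2 * b = ((-(α + α) : Δ) : ℂ) := by push_cast; linear_combination 2 * h
    rw [this]; exact (-(α + α) : Δ).2
  -- main functional identity
  have key : ∀ β : Δ, ∀ l d : ℂ,
      (b * l + φ α) * ev2 (f β) l d
        = ev2 (f 0) l (-l) * (((α : ℂ) + b) * d + ((α : ℂ) + (β : ℂ) + 2 * b) * l
            + Bc b φ α β) := by
    intro β l d
    have h := hder β 0 l (-l - d) d
    have e1 : -l - (-l - d) = d := by ring
    have e2 : -l - d + d = -l := by ring
    rw [e1, e2] at h
    simp only [add_zero, ZeroMemClass.coe_zero, map_zero, map_add, Bc] at h ⊢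
    field_simp at h ⊢
    linear_combination -h
  set l0 : ℂ := -(φ α) / b with hl0
  have hbl0 : b * l0 + φ α = 0 := by rw [hl0]; field_simp; ring
  -- f 0 (l, -l), as a polynomial in l, vanishes at l0
  have hroot : ev2 (f 0) l0 (-l0) = 0 := by
    set d0 : ℂ := (1 - (((α : ℂ) + ((0 : Δ) : ℂ) + 2 * b) * l0 + Bc b φ α 0)) / ((α : ℂ) + b)
      with hd0
    have hk := key 0 l0 d0
    rw [hbl0, zero_mul] at hk
    have hT : ((α : ℂ) + b) * d0 + (((α : ℂ) + ((0 : Δ) : ℂ) + 2 * b) * l0 + Bc b φ α 0) = 1 := by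
      rw [hd0]; field_simp; ring
    rw [add_assoc, hT, mul_one] at hk
    exact hk.symm
  set H : Polynomial ℂ := MvPolynomial.aeval ![Polynomial.X, -Polynomial.X] (f 0) with hH
  have evH : ∀ l : ℂ, H.eval l = ev2 (f 0) l (-l) := by
    intro l
    rw [hH, eval_aeval2]
    simp [ev2]
  have hHroot : Polynomial.IsRoot H l0 := by
    rw [Polynomial.IsRoot, evH]; exact hroot
  obtain ⟨H1, hH1⟩ := Polynomial.dvd_iff_isRoot.mpr hHroot
  refine ⟨Polynomial.C b⁻¹ * H1, ?_⟩
  set G : Polynomial ℂ := Polynomial.C b⁻¹ * H1 with hG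
  have hGev : ∀ l : ℂ, (b * l + φ α) * G.eval l = ev2 (f 0) l (-l) := by
    intro l
    rw [← evH, hH1, hG]
    simp only [Polynomial.eval_mul, Polynomial.eval_sub, Polynomial.eval_X, Polynomial.eval_C]
    calc (b * l + φ α) * (b⁻¹ * H1.eval l)
        = (b⁻¹ * (b * l + φ α)) * H1.eval l := by ring
      _ = (l - l0) * H1.eval l := by
          congr 1
          rw [hl0]
          field_simp
          ring
  intro β l d
  set p : Polynomial ℂ := MvPolynomial.aeval ![Polynomial.X, Polynomial.C d] (f β) with hp
  set T : Polynomial ℂ := Polynomial.C (((α : ℂ) + b) * d + Bc b φ α β)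
      + Polynomial.C ((α : ℂ) + (β : ℂ) + 2 * b) * Polynomial.X with hT
  have hevp : ∀ r : ℂ, p.eval r = ev2 (f β) r d := by
    intro r; rw [hp, eval_aeval2]; simp [ev2]
  have hevT : ∀ r : ℂ, T.eval r
      = ((α : ℂ) + b) * d + ((α : ℂ) + (β : ℂ) + 2 * b) * r + Bc b φ α β := by
    intro r; rw [hT]; simp; ring
  have hc : (Polynomial.C b * Polynomial.X + Polynomial.C (φ α)) ≠ 0 := by
    intro h0
    apply hb0
    have := congrArg (fun q => Polynomial.coeff q 1) h0
    simpa using this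
  have hpoly : (Polynomial.C b * Polynomial.X + Polynomial.C (φ α)) * p
      = (Polynomial.C b * Polynomial.X + Polynomial.C (φ α)) * (G * T) := by
    apply Polynomial.funext
    intro r
    simp only [Polynomial.eval_mul, Polynomial.eval_add, Polynomial.eval_C, Polynomial.eval_X]
    rw [hevp r, hevT r]
    linear_combination key β r d
      - (((α : ℂ) + b) * d + ((α : ℂ) + (β : ℂ) + 2 * b) * r + Bc b φ α β) * hGev r
  have hfinal := mul_left_cancel₀ hc hpoly
  calc ev2 (f β) l d = p.eval l := (hevp l).symm
    _ = (G * T).eval l := by rw [hfinal]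
    _ = G.eval l * T.eval l := by rw [Polynomial.eval_mul]
    _ = _ := by rw [hevT l]
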